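/- Let A ⊂ ℝ^d be a finite set that affinely spans ℝ^d and let w = (w_a)_{a∈A} be positive real weights. Then the map μ from the positive orthant ℝ_{>0}^d to ℝ^d defined by μ(t) = (Σ_{a∈A} w_a t^a · a) / (Σ_{a∈A} w_a t^a), where t^a := Π_{i=1}^d t_i^{a_i} (real powers), is injective and its image is exactly the interior of the convex hull of A. -/

import Mathlib

namespace ToricAux

variable {d : ℕ}

noncomputable def dotl (v : Fin d → ℝ) : (Fin d → ℝ) →L[ℝ] ℝ :=
  ∑ i, v i • (ContinuousLinearMap.proj i : (Fin d → ℝ) →L[ℝ] ℝ)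

lemma dotl_apply (v x : Fin d → ℝ) : dotl v x = ∑ i, v i * x i := by
  simp [dotl]

lemma prod_rpow_eq_exp {t : Fin d → ℝ} (ht : ∀ i, 0 < t i) (a : Fin d → ℝ) :
    ∏ i, t i ^ a i = Real.exp (∑ i, a i * Real.log (t i)) := by
  rw [Real.exp_sum]
  exact Finset.prod_congr rfl fun i _ => by
    rw [Real.rpow_def_of_pos (ht i), mul_comm]

lemma isLinearMap_dot (v : Fin d → ℝ) :
    IsLinearMap ℝ (fun (x : Fin d → ℝ) => ∑ i, x i * v i) := by
  constructor <;> intros <;>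
    simp [add_mul, Finset.sum_add_distrib, Finset.mul_sum, mul_assoc]

lemma nonempty_of_span (A : Finset (Fin d → ℝ))
    (hspan : affineSpan ℝ (A : Set (Fin d → ℝ)) = ⊤) : A.Nonempty := by
  by_contra h
  rw [Finset.not_nonempty_iff_eq_empty] at h
  subst h
  simp only [Finset.coe_empty, AffineSubspace.span_empty] at hspan
  exact bot_ne_top (α := AffineSubspace ℝ (Fin d → ℝ)) hspan

lemma exists_dot_ne (A : Finset (Fin d → ℝ))
    (hspan : affineSpan ℝ (A : Set (Fin d → ℝ)) = ⊤)
    {v : Fin d → ℝ} (hv : v ≠ 0) :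
    ∃ a ∈ A, ∃ b ∈ A, (∑ i, a i * v i) ≠ ∑ i, b i * v i := by
  by_contra h
  push_neg at h
  apply hv
  set L := (isLinearMap_dot v).mk' _ with hL
  have htop : vectorSpan ℝ (A : Set (Fin d → ℝ)) = ⊤ := by
    rw [← direction_affineSpan, hspan, AffineSubspace.direction_top]
  have hker : vectorSpan ℝ (A : Set (Fin d → ℝ)) ≤ LinearMap.ker L := by
    rw [vectorSpan_def]
    refine Submodule.span_le.2 ?_
    rintro x ⟨a, ha, b, hb, rfl⟩
    have := h a ha b hb
    simp only [SetLike.mem_coe, LinearMap.mem_ker, hL, IsLinearMap.mk'_apply]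
    show ∑ i, (a -ᵥ b) i * v i = 0
    have : ∑ i, (a -ᵥ b) i * v i = (∑ i, a i * v i) - ∑ i, b i * v i := by
      simp [vsub_eq_sub, sub_mul, Finset.sum_sub_distrib]
    rw [this, h a ha b hb]; ring
  rw [htop, top_le_iff, LinearMap.ker_eq_top] at hker
  have h0 : (∑ i, v i * v i) = 0 := by
    have := LinearMap.congr_fun hker v
    simpa [hL] using this
  funext i
  have := (Finset.sum_eq_zero_iff_of_nonneg (fun i _ => mul_self_nonneg (v i))).1 h0 i
    (Finset.mem_univ i)
  exact mul_self_eq_zero.mp this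


variable {d : ℕ}

lemma tilt_strict {ι : Type*} [DecidableEq ι] (A : Finset ι) (p s : ι → ℝ)
    (hp : ∀ a ∈ A, 0 < p a)
    (hne : ∃ a ∈ A, ∃ b ∈ A, s a ≠ s b) :
    (∑ a ∈ A, p a * s a) * (∑ a ∈ A, p a * Real.exp (s a)) <
    (∑ a ∈ A, p a * Real.exp (s a) * s a) * (∑ a ∈ A, p a) := by
  have expand : ∀ f g : ι → ℝ,
      (∑ a ∈ A, f a) * (∑ b ∈ A, g b) = ∑ q ∈ A ×ˢ A, f q.1 * g q.2 := by
    intro f g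
    rw [Finset.sum_mul_sum, Finset.sum_product]
  have key : (∑ a ∈ A, p a * Real.exp (s a) * s a) * (∑ a ∈ A, p a)
      - (∑ a ∈ A, p a * s a) * (∑ a ∈ A, p a * Real.exp (s a))
      + ((∑ a ∈ A, p a) * (∑ a ∈ A, p a * Real.exp (s a) * s a)
        - (∑ a ∈ A, p a * Real.exp (s a)) * (∑ a ∈ A, p a * s a))
      = ∑ q ∈ A ×ˢ A,
          p q.1 * p q.2 * ((Real.exp (s q.1) - Real.exp (s q.2)) * (s q.1 - s q.2)) := by
    rw [expand, expand, expand, expand, ← Finset.sum_sub_distrib, ← Finset.sum_sub_distrib,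
      ← Finset.sum_add_distrib]
    exact Finset.sum_congr rfl fun q _ => by ring
  have hpos : 0 < ∑ q ∈ A ×ˢ A,
      p q.1 * p q.2 * ((Real.exp (s q.1) - Real.exp (s q.2)) * (s q.1 - s q.2)) := by
    obtain ⟨a, ha, b, hb, hab⟩ := hne
    refine Finset.sum_pos' (fun q hq => ?_) ⟨(a, b), Finset.mem_product.2 ⟨ha, hb⟩, ?_⟩
    · obtain ⟨h1, h2⟩ := Finset.mem_product.1 hq
      refine mul_nonneg (mul_nonneg (hp _ h1).le (hp _ h2).le) ?_
      rcases le_total (s q.1) (s q.2) with h | h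
      · have := Real.exp_le_exp.2 h
        nlinarith
      · have := Real.exp_le_exp.2 h
        nlinarith
    · refine mul_pos (mul_pos (hp _ ha) (hp _ hb)) ?_
      rcases lt_or_gt_of_ne hab with h | h
      · have := Real.exp_lt_exp.2 h
        nlinarith
      · have := Real.exp_lt_exp.2 h
        nlinarith
  nlinarith [key, hpos]

lemma isLinearMap_dot' (v : Fin d → ℝ) :
    IsLinearMap ℝ (fun (x : Fin d → ℝ) => ∑ i, x i * v i) := by
  constructor <;> intros <;>
    simp [add_mul, Finset.sum_add_distrib, Finset.mul_sum, mul_assoc]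

lemma dot_le_of_mem_hull (A : Finset (Fin d → ℝ)) (hA : A.Nonempty) (v : Fin d → ℝ)
    {x : Fin d → ℝ} (hx : x ∈ convexHull ℝ (A : Set (Fin d → ℝ))) :
    ∃ a ∈ A, ∑ i, x i * v i ≤ ∑ i, a i * v i := by
  obtain ⟨a, ha, hEq⟩ := Finset.exists_mem_eq_sup' hA (fun a => ∑ i, a i * v i)
  refine ⟨a, ha, ?_⟩
  rw [← hEq]
  have hsub : convexHull ℝ (A : Set (Fin d → ℝ)) ⊆
      {y | (∑ i, y i * v i) ≤ A.sup' hA fun a => ∑ i, a i * v i} := by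
    apply convexHull_min
    · intro y hy
      exact Finset.le_sup' (fun a => ∑ i, a i * v i) (Finset.mem_coe.1 hy)
    · exact convex_halfSpace_le (isLinearMap_dot' v) _
  exact hsub hx


variable {d : ℕ}

lemma sum_smul_mem_interior (A : Finset (Fin d → ℝ))
    (hA : A.Nonempty)
    (hspan : affineSpan ℝ (A : Set (Fin d → ℝ)) = ⊤)
    (p : (Fin d → ℝ) → ℝ) (hp : ∀ a ∈ A, 0 < p a) (hsum : ∑ a ∈ A, p a = 1) :
    (∑ a ∈ A, p a • a) ∈ interior (convexHull ℝ (A : Set (Fin d → ℝ))) := by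
  have hconv : Convex ℝ (convexHull ℝ (A : Set (Fin d → ℝ))) := convex_convexHull _ _
  have hint : (interior (convexHull ℝ (A : Set (Fin d → ℝ)))).Nonempty := by
    rw [hconv.interior_nonempty_iff_affineSpan_eq_top, affineSpan_convexHull]
    exact hspan
  obtain ⟨x₀, hx₀⟩ := hint
  have hx₀' : x₀ ∈ convexHull ℝ (A : Set (Fin d → ℝ)) := interior_subset hx₀
  rw [Finset.convexHull_eq] at hx₀'
  obtain ⟨q, hq0, hq1, hq⟩ := hx₀'
  have hx₀eq : x₀ = ∑ a ∈ A, q a • a := by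
    rw [← hq, Finset.centerMass_eq_of_sum_1 _ _ hq1]
    simp
  -- ε := min of p over A
  set ε := A.inf' hA p with hε
  have hεpos : 0 < ε := by
    rw [hε, Finset.lt_inf'_iff]
    exact fun a ha => hp a ha
  have hεle : ∀ a ∈ A, ε ≤ p a := fun a ha => Finset.inf'_le _ ha
  have hq_le_one : ∀ a ∈ A, q a ≤ 1 := by
    intro a ha
    rw [← hq1]
    exact Finset.single_le_sum hq0 ha
  set r : (Fin d → ℝ) → ℝ := fun a => (1 + ε) * p a - ε * q a with hr
  have hr0 : ∀ a ∈ A, 0 ≤ r a := by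
    intro a ha
    have h1 : ε * q a ≤ ε := by
      have := hq_le_one a ha
      nlinarith [hq0 a ha]
    have h2 : ε ≤ (1 + ε) * p a := by nlinarith [hp a ha, hεle a ha]
    simp only [hr]; linarith
  have hrsum : ∑ a ∈ A, r a = 1 := by
    simp only [hr, Finset.sum_sub_distrib, ← Finset.mul_sum, hsum, hq1]
    ring
  have hy : (∑ a ∈ A, r a • a) ∈ convexHull ℝ (A : Set (Fin d → ℝ)) := by
    rw [Finset.convexHull_eq]
    exact ⟨r, hr0, hrsum, by rw [Finset.centerMass_eq_of_sum_1 _ _ hrsum]; simp⟩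
  have hcombo : (ε / (1 + ε)) • x₀ + (1 / (1 + ε)) • (∑ a ∈ A, r a • a)
      = ∑ a ∈ A, p a • a := by
    rw [hx₀eq, Finset.smul_sum, Finset.smul_sum, ← Finset.sum_add_distrib]
    refine Finset.sum_congr rfl fun a _ => ?_
    rw [smul_smul, smul_smul, ← add_smul]
    congr 1
    field_simp [hr]
    simp only [hr]; ring
  rw [← hcombo]
  exact hconv.combo_interior_closure_mem_interior hx₀
    (subset_closure hy)
    (by positivity) (by positivity) (by field_simp; ring)

lemma exists_critical (A : Finset (Fin d → ℝ)) (hA : A.Nonempty)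
    (w : (Fin d → ℝ) → ℝ) (hw : ∀ a ∈ A, 0 < w a)
    {m : Fin d → ℝ} (hm : m ∈ interior (convexHull ℝ (A : Set (Fin d → ℝ)))) :
    ∃ θ : Fin d → ℝ, ∀ j,
      ∑ a ∈ A, w a * Real.exp (∑ i, (a i - m i) * θ i) * (a j - m j) = 0 := by
  classical
  set G : (Fin d → ℝ) → ℝ := fun θ => ∑ a ∈ A, w a * Real.exp (dotl (a - m) θ) with hGdef
  set G' : (Fin d → ℝ) → ((Fin d → ℝ) →L[ℝ] ℝ) :=
    fun θ => ∑ a ∈ A, (w a * Real.exp (dotl (a - m) θ)) • dotl (a - m) with hG'def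
  have hG : ∀ θ, HasFDerivAt G (G' θ) θ := by
    intro θ
    refine HasFDerivAt.fun_sum fun a _ => ?_
    have h1 : HasFDerivAt (fun θ => Real.exp (dotl (a - m) θ))
        (Real.exp (dotl (a - m) θ) • dotl (a - m)) θ :=
      (Real.hasDerivAt_exp _).comp_hasFDerivAt θ (ContinuousLinearMap.hasFDerivAt (dotl (a - m)))
    have h2 := h1.const_mul (w a)
    convert h2 using 1
    all_goals first | rfl | rw [smul_smul]
  have hGc : Continuous G := continuous_iff_continuousAt.2 fun θ => (hG θ).continuousAt
  -- ball around m
  obtain ⟨r, hr, hball⟩ := Metric.mem_nhds_iff.1 (mem_interior_iff_mem_nhds.1 hm)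
  set ρ := r / 2 with hρ
  have hρpos : 0 < ρ := by positivity
  set S : (Fin d → ℝ) → ℝ := fun θ => ∑ i, θ i ^ 2 with hSdef
  have hS0 : ∀ θ, 0 ≤ S θ := fun θ => Finset.sum_nonneg fun i _ => sq_nonneg _
  have hnormS : ∀ θ : Fin d → ℝ, ‖θ‖ ≤ Real.sqrt (S θ) := by
    intro θ
    rw [pi_norm_le_iff_of_nonneg (Real.sqrt_nonneg _)]
    intro i
    rw [Real.norm_eq_abs, ← Real.sqrt_sq_eq_abs]
    apply Real.sqrt_le_sqrt
    exact Finset.single_le_sum (fun i _ => sq_nonneg (θ i)) (Finset.mem_univ i)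
  have hcoer : ∀ θ, ∃ a ∈ A, ρ * Real.sqrt (S θ) ≤ ∑ i, (a i - m i) * θ i := by
    intro θ
    by_cases hθ : θ = 0
    · obtain ⟨a, ha⟩ := hA
      exact ⟨a, ha, by simp [hθ, hSdef]⟩
    · have hSpos : 0 < S θ := by
        obtain ⟨i, hi⟩ := Function.ne_iff.1 hθ
        exact Finset.sum_pos' (fun i _ => sq_nonneg _)
          ⟨i, Finset.mem_univ i, sq_pos_of_ne_zero hi⟩
      set σ := Real.sqrt (S θ) with hσdef
      have hσpos : 0 < σ := Real.sqrt_pos.2 hSpos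
      set u := m + (ρ / σ) • θ with hu
      have humem : u ∈ convexHull ℝ (A : Set (Fin d → ℝ)) := by
        apply hball
        rw [Metric.mem_ball, dist_eq_norm]
        have : u - m = (ρ / σ) • θ := by rw [hu]; abel
        rw [this, norm_smul, Real.norm_eq_abs, abs_of_pos (by positivity)]
        calc ρ / σ * ‖θ‖ ≤ ρ / σ * σ := by
              exact mul_le_mul_of_nonneg_left (hnormS θ) (by positivity)
          _ = ρ := by field_simp
          _ < r := by rw [hρ]; linarith
      obtain ⟨a, ha, hle⟩ := dot_le_of_mem_hull A hA θ humem
      refine ⟨a, ha, ?_⟩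
      have h1 : ∑ i, u i * θ i = (∑ i, m i * θ i) + (ρ / σ) * S θ := by
        simp only [hu, Pi.add_apply, Pi.smul_apply, smul_eq_mul, add_mul,
          Finset.sum_add_distrib, hSdef, Finset.mul_sum]
        congr 1
        exact Finset.sum_congr rfl fun i _ => by ring
      have h2 : (ρ / σ) * S θ = ρ * σ := by
        have hss : S θ = σ * σ := (Real.mul_self_sqrt hSpos.le).symm
        rw [hss]; field_simp
      have h3 : ∑ i, (a i - m i) * θ i = (∑ i, a i * θ i) - ∑ i, m i * θ i := by
        simp [sub_mul, Finset.sum_sub_distrib]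
      rw [h3]
      linarith [hle, h1, h2]
  -- lower bound for G
  set wmin := A.inf' hA w with hwmin
  have hwminpos : 0 < wmin := by
    rw [hwmin, Finset.lt_inf'_iff]
    exact fun a ha => hw a ha
  have hlb : ∀ θ, wmin * Real.exp (ρ * Real.sqrt (S θ)) ≤ G θ := by
    intro θ
    obtain ⟨a, ha, hle⟩ := hcoer θ
    have h1 : w a * Real.exp (dotl (a - m) θ) ≤ G θ := by
      refine Finset.single_le_sum (f := fun a => w a * Real.exp (dotl (a - m) θ))
        (fun b hb => mul_nonneg (hw b hb).le (Real.exp_pos _).le) ha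
    have h2 : dotl (a - m) θ = ∑ i, (a i - m i) * θ i := by
      rw [dotl_apply]
      exact Finset.sum_congr rfl fun i _ => by simp
    have h3 : Real.exp (ρ * Real.sqrt (S θ)) ≤ Real.exp (dotl (a - m) θ) := by
      rw [h2]; exact Real.exp_le_exp.2 hle
    have h4 : wmin ≤ w a := Finset.inf'_le _ ha
    nlinarith [Real.exp_pos (ρ * Real.sqrt (S θ)), Real.exp_pos (dotl (a - m) θ)]
  -- sublevel set is compact
  have hG0pos : 0 < G 0 := by
    refine Finset.sum_pos' (fun a ha => mul_nonneg (hw a ha).le (Real.exp_pos _).le) ?_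
    obtain ⟨a, ha⟩ := hA
    exact ⟨a, ha, mul_pos (hw a ha) (Real.exp_pos _)⟩
  set K := {θ : Fin d → ℝ | G θ ≤ G 0} with hK
  set R := ρ⁻¹ * Real.log (G 0 / wmin) with hR
  have hKsub : K ⊆ Metric.closedBall 0 R := by
    intro θ hθ
    rw [Metric.mem_closedBall, dist_zero_right]
    have h1 : wmin * Real.exp (ρ * Real.sqrt (S θ)) ≤ G 0 := le_trans (hlb θ) hθ
    have h2 : Real.exp (ρ * Real.sqrt (S θ)) ≤ G 0 / wmin := by
      rw [le_div_iff₀ hwminpos]; linarith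
    have h3 : ρ * Real.sqrt (S θ) ≤ Real.log (G 0 / wmin) := by
      rw [← Real.le_log_iff_exp_le (by positivity)] at h2
      exact h2
    have h4 : Real.sqrt (S θ) ≤ R := by
      rw [hR, inv_mul_eq_div, le_div_iff₀ hρpos]
      linarith [h3, mul_comm ρ (Real.sqrt (S θ))]
    exact le_trans (hnormS θ) h4
  have hKcompact : IsCompact K := by
    refine Metric.isCompact_of_isClosed_isBounded ?_ ?_
    · exact isClosed_le hGc continuous_const
    · exact (Metric.isBounded_closedBall (x := (0 : Fin d → ℝ)) (r := R)).subset hKsub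
  have h0K : (0 : Fin d → ℝ) ∈ K := show G 0 ≤ G 0 from le_refl _
  have hKne : K.Nonempty := ⟨0, h0K⟩
  obtain ⟨θ₀, hθ₀K, hmin⟩ := hKcompact.exists_isMinOn hKne hGc.continuousOn
  have hglob : ∀ θ, G θ₀ ≤ G θ := by
    intro θ
    by_cases hθ : θ ∈ K
    · exact hmin hθ
    · have h1 : G 0 < G θ := by
        simp only [hK, Set.mem_setOf_eq, not_le] at hθ
        exact hθ
      exact le_trans (hmin h0K) h1.le
  have hloc : IsLocalMin G θ₀ := Filter.Eventually.of_forall hglob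
  have hzero : G' θ₀ = 0 := hloc.hasFDerivAt_eq_zero (hG θ₀)
  refine ⟨θ₀, fun j => ?_⟩
  have happ := congrArg (fun L : (Fin d → ℝ) →L[ℝ] ℝ => L (Pi.single j 1)) hzero
  simp only [hG'def, ContinuousLinearMap.sum_apply, ContinuousLinearMap.smul_apply,
    ContinuousLinearMap.zero_apply, smul_eq_mul] at happ
  have hproj : ∀ v : Fin d → ℝ, dotl v (Pi.single j 1) = v j := by
    intro v
    rw [dotl_apply]
    simp [Pi.single_apply, mul_ite, Finset.sum_ite_eq']
  have hsum : ∑ a ∈ A, w a * Real.exp (∑ i, (a i - m i) * θ₀ i) * (a j - m j)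
      = ∑ x ∈ A, w x * Real.exp (dotl (x - m) θ₀) * (dotl (x - m)) (Pi.single j 1) := by
    refine Finset.sum_congr rfl fun a ha => ?_
    rw [hproj]
    have h2 : dotl (a - m) θ₀ = ∑ i, (a i - m i) * θ₀ i := by
      rw [dotl_apply]
      exact Finset.sum_congr rfl fun i _ => by simp
    rw [h2]
    simp
  rw [hsum, happ]

end ToricAux

open ToricAux in
theorem toric_moment_map_injective_image_interior
    (d : ℕ) (A : Finset (Fin d → ℝ))
    (hspan : affineSpan ℝ (A : Set (Fin d → ℝ)) = ⊤)
    (w : (Fin d → ℝ) → ℝ) (hw : ∀ a ∈ A, 0 < w a)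
    (μ : (Fin d → ℝ) → (Fin d → ℝ))
    (hμ : ∀ t, μ t = (∑ a ∈ A, w a * ∏ i, t i ^ a i)⁻¹ •
        ∑ a ∈ A, (w a * ∏ i, t i ^ a i) • a) :
    Set.InjOn μ {t | ∀ i, 0 < t i} ∧
    μ '' {t | ∀ i, 0 < t i} = interior (convexHull ℝ (A : Set (Fin d → ℝ))) := by
  classical
  have hA : A.Nonempty := nonempty_of_span A hspan
  have hZpos : ∀ θ : Fin d → ℝ, 0 < ∑ a ∈ A, w a * Real.exp (∑ i, a i * θ i) := by
    intro θ
    refine Finset.sum_pos' (fun a ha => mul_nonneg (hw a ha).le (Real.exp_pos _).le) ?_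
    obtain ⟨a, ha⟩ := hA
    exact ⟨a, ha, mul_pos (hw a ha) (Real.exp_pos _)⟩
  have hrep : ∀ t : Fin d → ℝ, (∀ i, 0 < t i) →
      ∃ θ : Fin d → ℝ, t = fun i => Real.exp (θ i) :=
    fun t ht => ⟨fun i => Real.log (t i), funext fun i => (Real.exp_log (ht i)).symm⟩
  have hμexp : ∀ θ : Fin d → ℝ, μ (fun i => Real.exp (θ i)) =
      (∑ a ∈ A, w a * Real.exp (∑ i, a i * θ i))⁻¹ •
        ∑ a ∈ A, (w a * Real.exp (∑ i, a i * θ i)) • a := by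
    intro θ
    rw [hμ]
    have hp : ∀ a : Fin d → ℝ, ∏ i, Real.exp (θ i) ^ a i = Real.exp (∑ i, a i * θ i) := by
      intro a
      rw [prod_rpow_eq_exp (fun i => Real.exp_pos _)]
      simp [Real.log_exp]
    simp only [hp]
  have hdotν : ∀ (θ v : Fin d → ℝ),
      (∑ j, (((∑ a ∈ A, w a * Real.exp (∑ i, a i * θ i))⁻¹ •
          ∑ a ∈ A, (w a * Real.exp (∑ i, a i * θ i)) • a)) j * v j)
      = (∑ a ∈ A, w a * Real.exp (∑ i, a i * θ i))⁻¹ *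
          ∑ a ∈ A, (w a * Real.exp (∑ i, a i * θ i)) * ∑ j, a j * v j := by
    intro θ v
    have h1 : ∀ j, (((∑ a ∈ A, w a * Real.exp (∑ i, a i * θ i))⁻¹ •
          ∑ a ∈ A, (w a * Real.exp (∑ i, a i * θ i)) • a)) j * v j
        = (∑ a ∈ A, w a * Real.exp (∑ i, a i * θ i))⁻¹ *
            ∑ a ∈ A, (w a * Real.exp (∑ i, a i * θ i)) * (a j * v j) := by
      intro j
      simp [Finset.sum_apply, Finset.sum_mul, mul_assoc]
    rw [Finset.sum_congr rfl fun j _ => h1 j, ← Finset.mul_sum, Finset.sum_comm]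
    congr 1
    exact Finset.sum_congr rfl fun a _ => by rw [Finset.mul_sum]
  constructor
  · -- injectivity
    intro t₁ ht₁ t₂ ht₂ heq
    obtain ⟨θ, rfl⟩ := hrep t₁ ht₁
    obtain ⟨η, rfl⟩ := hrep t₂ ht₂
    by_contra hne
    have hv : θ - η ≠ 0 := by
      intro h
      exact hne (by rw [sub_eq_zero.1 h])
    obtain ⟨a₀, ha₀, b₀, hb₀, hab⟩ := exists_dot_ne A hspan hv
    have hpes : ∀ a : Fin d → ℝ,
        (w a * Real.exp (∑ i, a i * η i)) * Real.exp (∑ i, a i * (θ - η) i)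
          = w a * Real.exp (∑ i, a i * θ i) := by
      intro a
      rw [mul_assoc, ← Real.exp_add]
      congr 2
      rw [← Finset.sum_add_distrib]
      exact Finset.sum_congr rfl fun i _ => by simp [Pi.sub_apply]; ring
    have hkey := tilt_strict A (fun a => w a * Real.exp (∑ i, a i * η i))
      (fun a => ∑ i, a i * (θ - η) i)
      (fun a ha => mul_pos (hw a ha) (Real.exp_pos _)) ⟨a₀, ha₀, b₀, hb₀, hab⟩
    simp only [hpes] at hkey
    have E := congrArg (fun x : Fin d → ℝ => ∑ j, x j * (θ - η) j) heq
    simp only [hμexp θ, hμexp η] at E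
    rw [hdotν θ (θ - η), hdotν η (θ - η)] at E
    have hZθ := hZpos θ
    have hZη := hZpos η
    rw [inv_mul_eq_div, inv_mul_eq_div, div_eq_div_iff hZθ.ne' hZη.ne'] at E
    nlinarith [hkey, E]
  · -- image
    apply Set.Subset.antisymm
    · rintro x ⟨t, ht, rfl⟩
      obtain ⟨θ, rfl⟩ := hrep t ht
      rw [hμexp θ]
      have hone : ∑ a ∈ A, (∑ b ∈ A, w b * Real.exp (∑ i, b i * θ i))⁻¹ *
          (w a * Real.exp (∑ i, a i * θ i)) = 1 := by
        rw [← Finset.mul_sum]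
        exact inv_mul_cancel₀ (hZpos θ).ne'
      have hrw : (∑ a ∈ A, w a * Real.exp (∑ i, a i * θ i))⁻¹ •
            (∑ a ∈ A, (w a * Real.exp (∑ i, a i * θ i)) • a)
          = ∑ a ∈ A, ((∑ b ∈ A, w b * Real.exp (∑ i, b i * θ i))⁻¹ *
              (w a * Real.exp (∑ i, a i * θ i))) • a := by
        rw [Finset.smul_sum]
        exact Finset.sum_congr rfl fun a _ => by rw [smul_smul]
      rw [hrw]
      exact sum_smul_mem_interior A hA hspan _
        (fun a ha => mul_pos (inv_pos.2 (hZpos θ)) (mul_pos (hw a ha) (Real.exp_pos _)))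
        hone
    · intro m hm
      obtain ⟨θ, hθ⟩ := exists_critical A hA w hw hm
      refine ⟨fun i => Real.exp (θ i), fun i => Real.exp_pos _, ?_⟩
      rw [hμexp θ]
      -- from criticality: ∑ a, (w a e^{⟨a,θ⟩}) * (a j - m j) = 0
      have hθ' : ∀ j, ∑ a ∈ A, (w a * Real.exp (∑ i, a i * θ i)) * (a j - m j) = 0 := by
        intro j
        have h0 := hθ j
        have hfac : ∀ a : Fin d → ℝ,
            w a * Real.exp (∑ i, (a i - m i) * θ i) * (a j - m j)
            = (w a * Real.exp (∑ i, a i * θ i)) * (a j - m j) *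
                Real.exp (- ∑ i, m i * θ i) := by
          intro a
          have : (∑ i, (a i - m i) * θ i) = (∑ i, a i * θ i) + (- ∑ i, m i * θ i) := by
            rw [← Finset.sum_neg_distrib, ← Finset.sum_add_distrib]
            exact Finset.sum_congr rfl fun i _ => by ring
          rw [this, Real.exp_add]
          ring
        rw [Finset.sum_congr rfl fun a _ => hfac a, ← Finset.sum_mul] at h0
        rcases mul_eq_zero.1 h0 with h | h
        · exact h
        · exact absurd h (Real.exp_pos _).ne'
      funext j
      have hsum : ∑ a ∈ A, (w a * Real.exp (∑ i, a i * θ i)) * a j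
          = (∑ a ∈ A, w a * Real.exp (∑ i, a i * θ i)) * m j := by
        have := hθ' j
        rw [Finset.sum_congr rfl (fun a (_ : a ∈ A) => by ring :
          ∀ a ∈ A, (w a * Real.exp (∑ i, a i * θ i)) * (a j - m j)
            = (w a * Real.exp (∑ i, a i * θ i)) * a j
              - (w a * Real.exp (∑ i, a i * θ i)) * m j),
          Finset.sum_sub_distrib, sub_eq_zero, ← Finset.sum_mul] at this
        exact this
      have happ : ((∑ a ∈ A, w a * Real.exp (∑ i, a i * θ i))⁻¹ •
          ∑ a ∈ A, (w a * Real.exp (∑ i, a i * θ i)) • a) j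
          = (∑ a ∈ A, w a * Real.exp (∑ i, a i * θ i))⁻¹ *
              ∑ a ∈ A, (w a * Real.exp (∑ i, a i * θ i)) * a j := by
        simp [Finset.sum_apply]
      rw [happ, hsum, inv_mul_cancel_left₀ (hZpos θ).ne']
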